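/- Let Λ be a Noetherian ring and a, b : C → C' morphisms in the derived category of perfect complexes of Λ-modules. Suppose f is an element of the center of Λ such that Λ[1/f] ⊗^L_Λ Cone(b) = 0. Then there exist n ≥ 0 and a morphism c : C' → C' such that f^n · a = c ∘ b in the derived category. -/

import Mathlib

open CategoryTheory CochainComplex HomComplex Limits

section Helpers

variable {R : Type} [CommRing R]

lemma elt_eq_zero_of_isZero {M : ModuleCat R} (h : Limits.IsZero M) (x : M) : x = 0 := by
  have h1 : (𝟙 M : M ⟶ M) = 0 := h.eq_of_src _ _
  calc x = (𝟙 M : M ⟶ M) x := rfl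
  _ = (0 : M ⟶ M) x := by rw [h1]
  _ = 0 := rfl

lemma exists_pow_smul_eq_zero_of_finite {M : Type*} [AddCommGroup M] [Module R M]
    [Module.Finite R M] (f : R) (h : ∀ x : M, ∃ n : ℕ, f ^ n • x = 0) :
    ∃ n : ℕ, ∀ x : M, f ^ n • x = 0 := by
  choose nf hnf using h
  obtain ⟨s, hs⟩ := Module.Finite.fg_top (R := R) (M := M)
  refine ⟨s.sup nf, fun x => ?_⟩
  have hx : x ∈ Submodule.span R (s : Set M) := by rw [hs]; trivial
  induction hx using Submodule.span_induction with
  | mem y hy =>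
      have hle : nf y ≤ s.sup nf := Finset.le_sup hy
      rw [show s.sup nf = (s.sup nf - nf y) + nf y by omega, pow_add, mul_smul, hnf, smul_zero]
  | zero => simp
  | add y z _ _ hy hz => rw [smul_add, hy, hz, add_zero]
  | smul r y _ hy => rw [smul_comm, hy, smul_zero]

lemma eqToHom_comp_d (L : CochainComplex (ModuleCat R) ℤ) {i i' j : ℤ} (h : i = i') :
    (eqToHom (congrArg L.X h) : L.X i ⟶ L.X i') ≫ L.d i' j = L.d i j := by
  subst h; simp

/-- A chain map is "ghost" if it sends every cycle to a boundary. -/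
def IsGhost {K L : CochainComplex (ModuleCat R) ℤ} (ψ : K ⟶ L) : Prop :=
  ∀ (h i j : ℤ), h + 1 = i → i + 1 = j → ∀ x : K.X i, K.d i j x = 0 →
    ∃ y : L.X h, L.d h i y = ψ.f i x

noncomputable def powHom {K : CochainComplex (ModuleCat R) ℤ} (ψ : K ⟶ K) : ℕ → (K ⟶ K)
  | 0 => 𝟙 K
  | (n+1) => powHom ψ n ≫ ψ

lemma powHom_comm {K : CochainComplex (ModuleCat R) ℤ} (ψ : K ⟶ K) (n : ℕ) :
    powHom ψ n ≫ ψ = ψ ≫ powHom ψ n := by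
  induction n with
  | zero => simp [powHom]
  | succ n ih => show (powHom ψ n ≫ ψ) ≫ ψ = _; rw [ih]; simp [powHom, ih]

lemma powHom_smul_id (K : CochainComplex (ModuleCat R) ℤ) (r : R) (n : ℕ) :
    powHom (r • 𝟙 K) n = (r ^ n) • 𝟙 K := by
  induction n with
  | zero => simp [powHom]
  | succ n ih =>
      show powHom (r • 𝟙 K) n ≫ (r • 𝟙 K) = _
      rw [ih, Linear.smul_comp, Linear.comp_smul, Category.id_comp, smul_smul, ← pow_succ]

end Helpers

section GhostInduction

variable {R : Type} [CommRing R]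

lemma ghost_induction (K L : CochainComplex (ModuleCat R) ℤ)
    (hproj : ∀ i : ℤ, Module.Projective R (K.X i))
    (a : ℤ) (hbot : ∀ i : ℤ, i < a → ∀ x : K.X i, x = 0)
    (ψ : L ⟶ L) (hψ : IsGhost ψ) :
    ∀ (l : ℕ) (b : ℤ), b ≤ a + l → ∀ g : K ⟶ L,
    (∀ i : ℤ, b ≤ i → g.f i = 0) →
    (∀ (i j : ℤ), i + 1 = b → j + 1 = i → ∀ x : K.X i, ∃ y : L.X j, L.d j i y = g.f i x) →
    Nonempty (Homotopy (g ≫ powHom ψ l) 0) := by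
  intro l
  induction l with
  | zero =>
    intro b hb g hsupp _
    have hg : g = 0 := by
      ext i x
      by_cases hi : b ≤ i
      · rw [hsupp i hi]; rfl
      · rw [hbot i (by omega) x, map_zero]; rfl
    exact ⟨Homotopy.ofEq (by simp [powHom, hg])⟩
  | succ l IH =>
    intro b hb g hsupp htop
    by_cases hb' : b ≤ a + l
    · obtain ⟨H⟩ := IH b hb' g hsupp htop
      exact ⟨(Homotopy.ofEq (by simp [powHom])).trans
        ((H.compRight ψ).trans (Homotopy.ofEq (by simp)))⟩
    · -- construct the lift t
      obtain ⟨t, ht⟩ : ∃ t : K.X (b-1) ⟶ L.X (b-2),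
          ∀ x, L.d (b-2) (b-1) (t x) = g.f (b-1) x := by
        have := hproj (b-1)
        obtain ⟨h, hh⟩ := Module.projective_lifting_property
          (LinearMap.rangeRestrict (L.d (b-2) (b-1)).hom)
          (LinearMap.codRestrict (LinearMap.range (L.d (b-2) (b-1)).hom) (g.f (b-1)).hom
            (fun x => htop (b-1) (b-2) (by omega) (by omega) x))
          (LinearMap.surjective_rangeRestrict _)
        refine ⟨ModuleCat.ofHom h, fun x => ?_⟩
        exact congrArg Subtype.val (congrArg (fun φ => φ x) hh)
      have htm : t ≫ L.d (b-2) (b-1) = g.f (b-1) := by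
        ext x; simpa using ht x
      -- the degree (-1) cochain concentrated at b-1
      set z' : Cochain K L (-1) := Cochain.mk (fun p q hpq =>
        if h : p = b - 1 then
          (eqToHom (congrArg K.X h) : K.X p ⟶ K.X (b-1)) ≫ t ≫
            (eqToHom (congrArg L.X (show (b:ℤ)-2 = q by omega)) : L.X (b-2) ⟶ L.X q)
        else 0) with hz'
      have hzv : ∀ (p q : ℤ) (hpq : p + (-1) = q), p ≠ b - 1 → z'.v p q hpq = 0 := by
        intro p q hpq hp
        simp only [hz', Cochain.mk_v, dif_neg hp]
      have hzv1 : ∀ (q : ℤ) (hpq : (b:ℤ) - 1 + (-1) = q),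
          z'.v (b-1) q hpq =
            t ≫ (eqToHom (congrArg L.X (show (b:ℤ)-2 = q by omega)) : L.X (b-2) ⟶ L.X q) := by
        intro q hpq
        simp only [hz', Cochain.mk_v, dif_pos rfl, eqToHom_refl, Category.id_comp, dite_true]
      -- the corrected chain map g1
      have hc1 : δ 0 1 (Cochain.ofHom g - δ (-1) 0 z') = 0 := by
        simp only [δ_sub, δ_ofHom, δ_δ, sub_zero]
      set g1 : K ⟶ L := Cocycle.homOf (Cocycle.mk (Cochain.ofHom g - δ (-1) 0 z') 1
        (zero_add 1) hc1) with hg1def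
      have hg1f : ∀ i : ℤ, g1.f i = g.f i - (δ (-1) 0 z').v i i (add_zero i) := by
        intro i
        simp only [hg1def, Cocycle.homOf_f, Cocycle.mk_coe, Cochain.sub_v, Cochain.ofHom_v]
      have hδv : ∀ i : ℤ, (δ (-1) 0 z').v i i (add_zero i) =
          z'.v i (i-1) (by omega) ≫ L.d (i-1) i
            + (0:ℤ).negOnePow • (K.d i (i+1) ≫ z'.v (i+1) i (by omega)) :=
        fun i => δ_v (-1) 0 (by omega) z' i i (add_zero i) (i-1) (i+1) (by omega) rfl
      have hg1supp : ∀ i : ℤ, b - 1 ≤ i → g1.f i = 0 := by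
        intro i hi
        rw [hg1f, hδv]
        by_cases hib : i = b - 1
        · subst hib
          rw [hzv1 (b-1-1) (by omega), hzv _ _ _ (by omega), Category.assoc,
            eqToHom_comp_d L (show (b:ℤ)-2 = b-1-1 by omega), htm]
          simp
        · rw [hzv _ _ _ (by omega), hzv _ _ _ (by omega), hsupp i (by omega)]
          simp
      -- the homotopy g ~ g1
      have hmt : Homotopy g g1 := (Cochain.equivHomotopy g g1).symm ⟨z', by
        have : Cochain.ofHom g1 = Cochain.ofHom g - δ (-1) 0 z' := by
          rw [hg1def, Cocycle.cochain_ofHom_homOf_eq_coe, Cocycle.mk_coe]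
        rw [this]; abel⟩
      -- the next map
      set g2 : K ⟶ L := g1 ≫ ψ with hg2def
      have hg2supp : ∀ i : ℤ, b - 1 ≤ i → g2.f i = 0 := by
        intro i hi
        rw [hg2def, HomologicalComplex.comp_f, hg1supp i hi, Limits.zero_comp]
      have htop2 : ∀ (i j : ℤ), i + 1 = b - 1 → j + 1 = i → ∀ x : K.X i,
          ∃ y : L.X j, L.d j i y = g2.f i x := by
        intro i j hi hj x
        have hcyc : L.d i (i+1) (g1.f i x) = 0 := by
          have h1 := congrArg (fun φ => φ x) (g1.comm i (i+1))
          dsimp at h1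
          rw [h1, hg1supp (i+1) (by omega)]
          rfl
        obtain ⟨y, hy⟩ := hψ j i (i+1) hj rfl (g1.f i x) hcyc
        exact ⟨y, by rw [hy]; rfl⟩
      obtain ⟨H2⟩ := IH (b-1) (by omega) g2 hg2supp htop2
      refine ⟨(Homotopy.ofEq ?_).trans ((hmt.compRight (ψ ≫ powHom ψ l)).trans
        ((Homotopy.ofEq ?_).trans H2))⟩
      · show g ≫ powHom ψ l ≫ ψ = g ≫ ψ ≫ powHom ψ l
        rw [powHom_comm]
      · rw [hg2def, Category.assoc]

end GhostInduction

section Homology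

variable {R : Type} [CommRing R] [IsNoetherianRing R]

lemma homology_finite (K : CochainComplex (ModuleCat R) ℤ)
    (hfin : ∀ i : ℤ, Module.Finite R (K.X i)) (i : ℤ) :
    Module.Finite R (K.homology i) := by
  set S₀ := K.sc' (i-1) i (i+1) with hS₀
  have e : K.homology i ≅ S₀.moduleCatLeftHomologyData.H :=
    (ShortComplex.homologyMapIso (K.isoSc' (i-1) i (i+1) (by simp) (by simp))) ≪≫
      S₀.moduleCatHomologyIso
  haveI : Module.Finite R S₀.X₂ := hfin i
  haveI : IsNoetherian R S₀.X₂ := isNoetherian_of_isNoetherianRing_of_finite R S₀.X₂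
  haveI : Module.Finite R (LinearMap.ker S₀.g.hom) :=
    Module.Finite.iff_fg.mpr (IsNoetherian.noetherian _)
  haveI : Module.Finite R S₀.moduleCatLeftHomologyData.H :=
    Module.Finite.of_surjective (LinearMap.range S₀.moduleCatToCycles).mkQ
      (Submodule.mkQ_surjective _)
  exact Module.Finite.equiv (e.toLinearEquiv).symm

omit [IsNoetherianRing R] in
lemma ghost_of_torsion (K : CochainComplex (ModuleCat R) ℤ) (f : R) (N : ℕ)
    (h i j : ℤ) (htor : ∀ x : K.homology i, f ^ N • x = 0)
    (hhi : h + 1 = i) (hij : i + 1 = j) (x : K.X i) (hx : K.d i j x = 0) :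
    ∃ y : K.X h, K.d h i y = f ^ N • x := by
  set S₀ := K.sc' h i j with hS₀
  have e : K.homology i ≅ S₀.moduleCatLeftHomologyData.H :=
    (ShortComplex.homologyMapIso (K.isoSc' h i j (by simp; omega) (by simp; omega))) ≪≫
      S₀.moduleCatHomologyIso
  have htor' : ∀ w : S₀.moduleCatLeftHomologyData.H, f ^ N • w = 0 := by
    intro w
    have hw := congrArg (fun φ => φ w) e.inv_hom_id
    dsimp at hw
    rw [← hw, ← map_smul, htor (e.inv w), map_zero]
  have hξ : S₀.g x = 0 := hx
  set ξ : LinearMap.ker S₀.g.hom := ⟨x, hξ⟩ with hξdef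
  have h0 : f ^ N • ((LinearMap.range S₀.moduleCatToCycles).mkQ ξ) = 0 := htor' _
  rw [← map_smul] at h0
  rw [show (LinearMap.range S₀.moduleCatToCycles).mkQ (f ^ N • ξ) =
    Submodule.Quotient.mk (f ^ N • ξ) from rfl, Submodule.Quotient.mk_eq_zero] at h0
  obtain ⟨y, hy⟩ := h0
  exact ⟨y, congrArg Subtype.val hy⟩

end Homology

section MappingConeX

variable {R : Type} [CommRing R]
variable {C C' : CochainComplex (ModuleCat R) ℤ} (b : C ⟶ C')

lemma mappingCone_X_isZero (p : ℤ) (h1 : IsZero (C.X (p+1))) (h2 : IsZero (C'.X p)) :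
    IsZero ((mappingCone b).X p) := by
  rw [IsZero.iff_id_eq_zero]
  rw [← mappingCone.id_X b p (p+1) rfl]
  rw [h1.eq_of_src ((mappingCone.inl b).v (p+1) p (by omega)) 0,
    h2.eq_of_src ((mappingCone.inr b).f p) 0]
  simp

lemma mappingCone_X_finite (p : ℤ) [Module.Finite R (C.X (p+1))] [Module.Finite R (C'.X p)] :
    Module.Finite R ((mappingCone b).X p) := by
  apply Module.Finite.of_surjective
    (LinearMap.coprod ((mappingCone.inl b).v (p+1) p (by omega)).hom
      ((mappingCone.inr b).f p).hom)
  intro x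
  refine ⟨⟨((mappingCone.fst b).1.v p (p+1) rfl) x,
    ((mappingCone.snd b).v p p (add_zero p)) x⟩, ?_⟩
  have := congrArg (fun φ => φ x) (mappingCone.id_X b p (p+1) rfl)
  dsimp at this ⊢
  convert this using 1

lemma mappingCone_X_projective (p : ℤ) [Module.Projective R (C.X (p+1))]
    [Module.Projective R (C'.X p)] :
    Module.Projective R ((mappingCone b).X p) := by
  apply Module.Projective.of_split
    (LinearMap.prod ((mappingCone.fst b).1.v p (p+1) rfl).hom
      ((mappingCone.snd b).v p p (add_zero p)).hom)
    (LinearMap.coprod ((mappingCone.inl b).v (p+1) p (by omega)).hom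
      ((mappingCone.inr b).f p).hom)
  ext x
  have := congrArg (fun φ => φ x) (mappingCone.id_X b p (p+1) rfl)
  dsimp at this ⊢
  convert this using 1

end MappingConeX

section StepB

variable {R : Type} [CommRing R]
variable {C C' : CochainComplex (ModuleCat R) ℤ} (a b : C ⟶ C') (f : R) (M : ℕ)

lemma ofHom_smul (K L : CochainComplex (ModuleCat R) ℤ) (r : R) (φ : K ⟶ L) :
    Cochain.ofHom (r • φ) = r • Cochain.ofHom φ := by
  ext p
  simp only [Cochain.ofHom_v, Cochain.smul_v]
  rfl

lemma stepB (hmtp : Homotopy ((f ^ M : R) • 𝟙 (CochainComplex.mappingCone b)) 0) :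
    ∃ c : C' ⟶ C', Nonempty (Homotopy ((f ^ M : R) • a) (b ≫ c)) := by
  obtain ⟨z, hz⟩ := (Cochain.equivHomotopy _ _) hmtp
  rw [Cochain.ofHom_zero, add_zero, ofHom_smul] at hz
  set p1 : Cochain (mappingCone b) C 1 := (mappingCone.fst b).1 with hp1
  set w : Cochain (mappingCone b) C 0 := z.comp p1 (by omega) with hw
  have hδw : δ 0 1 w = -((f ^ M : R) • p1) := by
    rw [hw, δ_comp z p1 (by omega) 0 2 1 (by omega) (by omega) (by omega)]
    rw [Cocycle.δ_eq_zero, Cochain.comp_zero, ← hz]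
    simp [Cochain.smul_comp, Cochain.id_comp]
  set s12c : Cochain C' C 0 := (Cochain.ofHom (mappingCone.inr b)).comp w (zero_add 0)
    with hs12c
  have hs12δ : δ 0 1 s12c = 0 := by
    rw [hs12c, δ_zero_cochain_comp _ _ _ (by omega), hδw, δ_ofHom]
    simp only [Cochain.comp_neg, Cochain.comp_smul, Cochain.zero_comp, smul_zero, add_zero]
    rw [mappingCone.inr_fst]
    simp
  set s12 : C' ⟶ C := Cocycle.homOf (Cocycle.mk s12c 1 (zero_add 1) hs12δ) with hs12
  have hs12co : Cochain.ofHom s12 = s12c := by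
    rw [hs12, Cocycle.cochain_ofHom_homOf_eq_coe, Cocycle.mk_coe]
  set h₁ : Cochain C C (-1) := (mappingCone.inl b).comp w (by omega) with hh₁
  have hδh₁ : δ (-1) 0 h₁ =
      (Cochain.ofHom b).comp s12c (zero_add 0) - (f ^ M : R) • Cochain.ofHom (𝟙 C) := by
    rw [hh₁, δ_comp_zero_cochain _ _ _ (by omega), hδw, mappingCone.δ_inl]
    rw [Cochain.comp_neg, Cochain.comp_smul]
    rw [mappingCone.inl_fst]
    rw [Cochain.ofHom_comp, Cochain.comp_assoc_of_first_is_zero_cochain]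
    rw [← hs12c]
    abel
  have key : Cochain.ofHom ((f ^ M : R) • 𝟙 C) = δ (-1) 0 (-h₁) + Cochain.ofHom (b ≫ s12) := by
    rw [δ_neg, hδh₁, ofHom_smul, Cochain.ofHom_comp, hs12co]
    abel
  have H : Homotopy ((f ^ M : R) • 𝟙 C) (b ≫ s12) :=
    (Cochain.equivHomotopy _ _).symm ⟨-h₁, key⟩
  refine ⟨s12 ≫ a, ⟨(Homotopy.ofEq ?_).trans ((H.compRight a).trans (Homotopy.ofEq ?_))⟩⟩
  · rw [Linear.smul_comp, Category.id_comp]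
  · rw [Category.assoc]

end StepB

/-- Let `R` be a Noetherian (commutative, so that `f` is automatically
central) ring and `a, b : C ⟶ C'` morphisms of perfect complexes of `R`-modules.  If `f ∈ R`
is such that `R[1/f] ⊗^L Cone(b) = 0` (every homology class of the mapping cone of `b` is
killed by a power of `f`), then there exist `n ≥ 0` and `c : C' ⟶ C'` with
`f^n · a = c ∘ b` in the derived category (i.e. up to homotopy). -/
theorem stmt1 (R : Type) [CommRing R] [IsNoetherianRing R]
    (C C' : CochainComplex (ModuleCat R) ℤ)
    (hCbdd : ∃ N : ℕ, ∀ q : ℤ, N < |q| → Limits.IsZero (C.X q))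
    (hC'bdd : ∃ N : ℕ, ∀ q : ℤ, N < |q| → Limits.IsZero (C'.X q))
    (hCfin : ∀ q : ℤ, Module.Finite R (C.X q)) (hC'fin : ∀ q : ℤ, Module.Finite R (C'.X q))
    (hCproj : ∀ q : ℤ, Module.Projective R (C.X q))
    (hC'proj : ∀ q : ℤ, Module.Projective R (C'.X q))
    (a b : C ⟶ C') (f : R)
    (hloc : ∀ (i : ℤ) (x : (CochainComplex.mappingCone b).homology i), ∃ n : ℕ, f ^ n • x = 0) :
    ∃ (n : ℕ) (c : C' ⟶ C'), Nonempty (Homotopy ((f ^ n : R) • a) (b ≫ c)) := by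
  classical
  obtain ⟨N₁, hN₁⟩ := hCbdd
  obtain ⟨N₂, hN₂⟩ := hC'bdd
  set K := CochainComplex.mappingCone b with hK
  set B : ℤ := (N₁ : ℤ) + N₂ + 2 with hB
  have hBpos : 0 < B := by positivity
  -- vanishing of components of K outside [-B, B]
  have hKzero : ∀ i : ℤ, B ≤ |i| → IsZero (K.X i) := by
    intro i hi
    refine mappingCone_X_isZero b i (hN₁ (i+1) ?_) (hN₂ i ?_)
    · have h1 : |i| - |i+1| ≤ |i - (i+1)| := abs_sub_abs_le_abs_sub i (i+1)
      have h2 : |i - (i+1)| = 1 := by norm_num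
      have h3 : (0:ℤ) ≤ (N₂:ℤ) := by positivity
      rw [hB] at hi
      linarith
    · have h3 : (0:ℤ) ≤ (N₁:ℤ) := by positivity
      rw [hB] at hi
      linarith
  -- component-wise finiteness and projectivity
  have hKfin : ∀ i : ℤ, Module.Finite R (K.X i) := by
    intro i
    haveI := hCfin (i+1); haveI := hC'fin i
    exact mappingCone_X_finite b i
  have hKproj : ∀ i : ℤ, Module.Projective R (K.X i) := by
    intro i
    haveI := hCproj (i+1); haveI := hC'proj i
    exact mappingCone_X_projective b i
  -- uniform torsion exponents for homology
  have hNi : ∀ i : ℤ, ∃ n : ℕ, ∀ x : K.homology i, f ^ n • x = 0 := by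
    intro i
    haveI := homology_finite K hKfin i
    exact exists_pow_smul_eq_zero_of_finite (M := (K.homology i)) f (hloc i)
  choose nf hnf using hNi
  set N : ℕ := (Finset.Icc (-B) B).sup nf with hN
  have htorN : ∀ i : ℤ, i ∈ Finset.Icc (-B) B → ∀ x : K.homology i, f ^ N • x = 0 := by
    intro i hi x
    have hle : nf i ≤ N := Finset.le_sup hi
    rw [show N = (N - nf i) + nf i by omega, pow_add, mul_smul, hnf, smul_zero]
  set u : K ⟶ K := (f ^ N : R) • 𝟙 K with hu
  have huf : ∀ (i : ℤ) (x : K.X i), u.f i x = f ^ N • x := fun i x => rfl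
  -- u is a ghost map
  have hghost : IsGhost u := by
    intro h i j hhi hij x hx
    by_cases hir : i ∈ Finset.Icc (-B) B
    · obtain ⟨y, hy⟩ := ghost_of_torsion K f N h i j (htorN i hir) hhi hij x hx
      exact ⟨y, by rw [hy, huf]⟩
    · have habs : B ≤ |i| := by
        simp only [Finset.mem_Icc, not_and_or, not_le] at hir
        rcases hir with h' | h'
        · rw [abs_of_neg (by omega)]; omega
        · rw [abs_of_pos (by omega)]; omega
      refine ⟨0, ?_⟩
      rw [map_zero, huf, elt_eq_zero_of_isZero (hKzero i habs) x, smul_zero]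
  -- support of u
  have husupp : ∀ i : ℤ, B ≤ i → u.f i = 0 := by
    intro i hi
    exact (hKzero i (by rw [abs_of_pos (by omega)]; omega)).eq_of_src _ _
  -- top liftability at B
  have hutop : ∀ (i j : ℤ), i + 1 = B → j + 1 = i → ∀ x : K.X i,
      ∃ y : K.X j, K.d j i y = u.f i x := by
    intro i j hi hj x
    have hx : K.d i (i+1) x = 0 :=
      elt_eq_zero_of_isZero (hKzero (i+1) (by rw [abs_of_pos (by omega)]; omega)) _
    exact hghost j i (i+1) hj rfl x hx
  -- bottom vanishing
  have hbot : ∀ i : ℤ, i < -B → ∀ x : K.X i, x = 0 := by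
    intro i hi x
    exact elt_eq_zero_of_isZero (hKzero i (by rw [abs_of_neg (by omega)]; omega)) x
  -- run the ghost induction
  set l : ℕ := (2 * B).toNat with hl
  obtain ⟨H⟩ := ghost_induction K K hKproj (-B) hbot u hghost l B (by omega) u husupp hutop
  -- identify the composite with a power of f
  have hpow : u ≫ powHom u l = ((f ^ (N * (l+1)) : R) • 𝟙 K) := by
    rw [hu, powHom_smul_id, Linear.smul_comp, Linear.comp_smul, Category.id_comp, smul_smul]
    have : f ^ N * (f ^ N) ^ l = f ^ (N * (l + 1)) := by
      rw [← pow_mul, ← pow_add]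
      congr 1
      ring
    rw [this]
  have H' : Homotopy ((f ^ (N * (l+1)) : R) • 𝟙 K) 0 := (Homotopy.ofEq hpow.symm).trans H
  obtain ⟨c, ⟨Hc⟩⟩ := stepB a b f (N * (l+1)) H'
  exact ⟨N * (l+1), c, ⟨Hc⟩⟩
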